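/- Let h ≥ 1 and let σ_1, …, σ_{4h−1} be elements of a group G satisfying the braid relations. Then (σ_1σ_2⋯σ_{4h−1})^{4h} = (σ_1σ_2⋯σ_{2h−1} · σ_{4h−1}σ_{4h−2}⋯σ_{2h+1} · σ_{2h})^{4h}. (In the braid group B_{4h} this says that the full twist, i.e. the 4h-th power of σ_1σ_2⋯σ_{4h−1}, equals the 4h-th power of the rearranged word σ_1⋯σ_{2h−1}·σ_{4h−1}⋯σ_{2h+1}·σ_{2h}.) -/

import Mathlib

/-- The ascending product `σ_a σ_{a+1} ⋯ σ_b` (written left to right). -/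
def ascProd {G : Type*} [Group G] (σ : ℕ → G) (a b : ℕ) : G :=
  ((List.range' a (b + 1 - a)).map σ).prod

/-- The descending product `σ_a σ_{a-1} ⋯ σ_b` (written left to right). -/
def descProd {G : Type*} [Group G] (σ : ℕ → G) (a b : ℕ) : G :=
  (((List.range' b (a + 1 - b)).map σ).reverse).prod

section Aux

variable {G : Type*} [Group G] (σ : ℕ → G)

theorem ascProd_single (a : ℕ) : ascProd σ a a = σ a := by
  simp [ascProd]

theorem descProd_single (a : ℕ) : descProd σ a a = σ a := by
  simp [descProd]

theorem ascProd_empty (a : ℕ) : ascProd σ (a + 1) a = 1 := by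
  simp [ascProd]

theorem ascProd_head {a b : ℕ} (hab : a ≤ b) :
    ascProd σ a b = σ a * ascProd σ (a + 1) b := by
  unfold ascProd
  have h1 : b + 1 - a = (b - a) + 1 := by omega
  have h2 : b + 1 - (a + 1) = b - a := by omega
  rw [h1, h2, List.range'_succ]
  simp

theorem ascProd_last {a b : ℕ} (hab : a ≤ b + 1) :
    ascProd σ a (b + 1) = ascProd σ a b * σ (b + 1) := by
  unfold ascProd
  have h1 : b + 1 + 1 - a = (b + 1 - a) + 1 := by omega
  rw [h1, List.range'_concat]
  have h2 : a + 1 * (b + 1 - a) = b + 1 := by omega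
  rw [h2]
  simp

theorem ascProd_split {a c b : ℕ} (h1 : a ≤ c + 1) (h2 : c ≤ b) :
    ascProd σ a b = ascProd σ a c * ascProd σ (c + 1) b := by
  unfold ascProd
  rw [← List.prod_append, ← List.map_append]
  congr 2
  have e := @List.range'_append a (c + 1 - a) (b - c) 1
  have e1 : a + 1 * (c + 1 - a) = c + 1 := by omega
  have e2 : c + 1 - a + (b - c) = b + 1 - a := by omega
  rw [e1, e2] at e
  have e3 : b + 1 - (c + 1) = b - c := by omega
  rw [e3]
  exact e.symm

theorem descProd_head {a b : ℕ} (hab : b ≤ a + 1) :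
    descProd σ (a + 1) b = σ (a + 1) * descProd σ a b := by
  unfold descProd
  have h1 : a + 1 + 1 - b = (a + 1 - b) + 1 := by omega
  rw [h1, List.range'_concat]
  have h2 : b + 1 * (a + 1 - b) = a + 1 := by omega
  rw [h2]
  simp

theorem descProd_last {a b : ℕ} (hab : b ≤ a) :
    descProd σ a b = descProd σ a (b + 1) * σ b := by
  unfold descProd
  have h1 : a + 1 - b = (a - b) + 1 := by omega
  have h2 : a + 1 - (b + 1) = a - b := by omega
  rw [h1, h2, List.range'_succ]
  simp

theorem commute_ascProd {x : G} {a b : ℕ}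
    (hc : ∀ j, a ≤ j → j ≤ b → Commute x (σ j)) :
    Commute x (ascProd σ a b) := by
  unfold ascProd
  apply Commute.list_prod_right
  intro y hy
  simp only [List.mem_map] at hy
  obtain ⟨j, hj, rfl⟩ := hy
  rw [List.mem_range'_1] at hj
  exact hc j hj.1 (by omega)

theorem commute_descProd {x : G} {a b : ℕ}
    (hc : ∀ j, b ≤ j → j ≤ a → Commute x (σ j)) :
    Commute x (descProd σ a b) := by
  unfold descProd
  apply Commute.list_prod_right
  intro y hy
  rw [List.mem_reverse] at hy
  simp only [List.mem_map] at hy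
  obtain ⟨j, hj, rfl⟩ := hy
  rw [List.mem_range'_1] at hj
  exact hc j hj.1 (by omega)

end Aux

/-- The half twist on the generators `σ_{top-k+1}, …, σ_top`:
`Φ 0 = 1`, `Φ (k+1) = (σ_top σ_{top-1} ⋯ σ_{top-k}) · Φ k`. -/
def halfTwistAux {G : Type*} [Group G] (σ : ℕ → G) (top : ℕ) : ℕ → G
  | 0 => 1
  | k + 1 => descProd σ top (top - k) * halfTwistAux σ top k

theorem commute_halfTwistAux {G : Type*} [Group G] (σ : ℕ → G) (top : ℕ)
    {x : G} : ∀ k, k ≤ top →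
    (∀ j, top - k < j → j ≤ top → Commute x (σ j)) →
    Commute x (halfTwistAux σ top k)
  | 0, _, _ => Commute.one_right x
  | (k + 1), hk, hc => by
      unfold halfTwistAux
      apply Commute.mul_right
      · exact commute_descProd σ fun j hj1 hj2 => hc j (by omega) hj2
      · exact commute_halfTwistAux σ top k (by omega)
          (fun j hj1 hj2 => hc j (by omega) hj2)

/-- If `σ_1, …, σ_{4h-1}` satisfy the braid relations then
`(σ_1 σ_2 ⋯ σ_{4h-1})^{4h} = (σ_1 ⋯ σ_{2h-1} · σ_{4h-1} ⋯ σ_{2h+1} · σ_{2h})^{4h}`. -/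
theorem fullTwist_eq_rearranged_power
    {G : Type*} [Group G] (h : ℕ) (hh : 1 ≤ h) (σ : ℕ → G)
    (hbraid : ∀ i, 1 ≤ i → i + 2 ≤ 4 * h →
      σ i * σ (i + 1) * σ i = σ (i + 1) * σ i * σ (i + 1))
    (hcomm : ∀ i j, 1 ≤ i → 1 ≤ j → i + 1 ≤ 4 * h → j + 1 ≤ 4 * h → i + 2 ≤ j →
      σ i * σ j = σ j * σ i) :
    (ascProd σ 1 (4 * h - 1)) ^ (4 * h) =
      (ascProd σ 1 (2 * h - 1) * descProd σ (4 * h - 1) (2 * h + 1) * σ (2 * h)) ^ (4 * h) := by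
  set δ : G := ascProd σ 1 (4 * h - 1) with hδ
  -- the shift relation  δ σ_i = σ_{i+1} δ
  have shift : ∀ i, 1 ≤ i → i + 2 ≤ 4 * h → δ * σ i = σ (i + 1) * δ := by
    intro i hi1 hi2
    obtain ⟨p, rfl⟩ : ∃ p, i = p + 1 := ⟨i - 1, by omega⟩
    have hsplit : δ = ascProd σ 1 (p + 2) * ascProd σ (p + 3) (4 * h - 1) := by
      rw [hδ]
      have e := ascProd_split σ (a := 1) (c := p + 2) (b := 4 * h - 1)
        (by omega) (by omega)
      rw [show p + 2 + 1 = p + 3 by omega] at e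
      exact e
    have ctail : ascProd σ (p + 3) (4 * h - 1) * σ (p + 1)
        = σ (p + 1) * ascProd σ (p + 3) (4 * h - 1) := by
      have : Commute (σ (p + 1)) (ascProd σ (p + 3) (4 * h - 1)) :=
        commute_ascProd σ fun j hj1 hj2 =>
          hcomm (p + 1) j (by omega) (by omega) (by omega) (by omega) (by omega)
      exact this.symm.eq
    have chead : Commute (σ (p + 2)) (ascProd σ 1 p) :=
      (commute_ascProd σ fun j hj1 hj2 =>
        ((hcomm j (p + 2) (by omega) (by omega) (by omega) (by omega) (by omega)).symm))
    have hA : ascProd σ 1 (p + 2) * σ (p + 1) = σ (p + 2) * ascProd σ 1 (p + 2) := by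
      have e1 : ascProd σ 1 (p + 2) = ascProd σ 1 (p + 1) * σ (p + 2) :=
        ascProd_last σ (by omega)
      have e2 : ascProd σ 1 (p + 1) = ascProd σ 1 p * σ (p + 1) :=
        ascProd_last σ (by omega)
      have hb := hbraid (p + 1) (by omega) (by omega)
      calc ascProd σ 1 (p + 2) * σ (p + 1)
          = ascProd σ 1 p * (σ (p + 1) * σ (p + 2) * σ (p + 1)) := by
            rw [e1, e2]; group
        _ = ascProd σ 1 p * (σ (p + 2) * σ (p + 1) * σ (p + 2)) := by rw [hb]
        _ = (ascProd σ 1 p * σ (p + 2)) * (σ (p + 1) * σ (p + 2)) := by group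
        _ = (σ (p + 2) * ascProd σ 1 p) * (σ (p + 1) * σ (p + 2)) := by
            rw [← chead.eq]
        _ = σ (p + 2) * ascProd σ 1 (p + 2) := by rw [e1, e2]; group
    calc δ * σ (p + 1)
        = ascProd σ 1 (p + 2) * (ascProd σ (p + 3) (4 * h - 1) * σ (p + 1)) := by
          rw [hsplit, mul_assoc]
      _ = (ascProd σ 1 (p + 2) * σ (p + 1)) * ascProd σ (p + 3) (4 * h - 1) := by
          rw [ctail, ← mul_assoc]
      _ = σ (p + 2) * (ascProd σ 1 (p + 2) * ascProd σ (p + 3) (4 * h - 1)) := by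
          rw [hA, mul_assoc]
      _ = σ (p + 2) * δ := by rw [← hsplit]
  -- iterated shift
  have shiftpow : ∀ k i, 1 ≤ i → i + k + 1 ≤ 4 * h → δ ^ k * σ i = σ (i + k) * δ ^ k := by
    intro k
    induction k with
    | zero => intro i _ _; simp
    | succ k ih =>
        intro i hi1 hi2
        have e : δ ^ (k + 1) = δ ^ k * δ := pow_succ δ k
        calc δ ^ (k + 1) * σ i = δ ^ k * (δ * σ i) := by rw [e, mul_assoc]
          _ = δ ^ k * (σ (i + 1) * δ) := by rw [shift i hi1 (by omega)]
          _ = (δ ^ k * σ (i + 1)) * δ := by rw [mul_assoc]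
          _ = σ (i + 1 + k) * δ ^ k * δ := by rw [ih (i + 1) (by omega) (by omega)]
          _ = σ (i + (k + 1)) * δ ^ (k + 1) := by
              rw [show i + 1 + k = i + (k + 1) by omega, e, mul_assoc]
  -- the key identity  E_{a+1} E_a σ_{top} = σ_a E_{a+1} E_a
  have key : ∀ k a, a + k = 4 * h - 1 → 1 ≤ a →
      ascProd σ (a + 1) (4 * h - 1) * ascProd σ a (4 * h - 1) * σ (4 * h - 1)
        = σ a * (ascProd σ (a + 1) (4 * h - 1) * ascProd σ a (4 * h - 1)) := by
    intro k
    induction k with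
    | zero =>
        intro a ha h1
        have : a = 4 * h - 1 := by omega
        subst this
        have e1 : ascProd σ (4 * h - 1 + 1) (4 * h - 1) = 1 := ascProd_empty σ _
        have e2 : ascProd σ (4 * h - 1) (4 * h - 1) = σ (4 * h - 1) := ascProd_single σ _
        rw [e1, e2]; group
    | succ k ih =>
        intro a ha h1
        have IH := ih (a + 1) (by omega) (by omega)
        have e1 : ascProd σ a (4 * h - 1) = σ a * ascProd σ (a + 1) (4 * h - 1) :=
          ascProd_head σ (by omega)
        have e2 : ascProd σ (a + 1) (4 * h - 1) = σ (a + 1) * ascProd σ (a + 2) (4 * h - 1) := by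
          have e := ascProd_head σ (a := a + 1) (b := 4 * h - 1) (by omega)
          rw [show a + 1 + 1 = a + 2 by omega] at e
          exact e
        have c1 : Commute (σ a) (ascProd σ (a + 2) (4 * h - 1)) :=
          commute_ascProd σ fun j hj1 hj2 =>
            hcomm a j (by omega) (by omega) (by omega) (by omega) (by omega)
        have hb := hbraid a (by omega) (by omega)
        calc ascProd σ (a + 1) (4 * h - 1) * ascProd σ a (4 * h - 1) * σ (4 * h - 1)
            = (ascProd σ (a + 1) (4 * h - 1) * σ a)
                * (ascProd σ (a + 1) (4 * h - 1) * σ (4 * h - 1)) := by rw [e1]; group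
          _ = (σ (a + 1) * (ascProd σ (a + 2) (4 * h - 1) * σ a))
                * (ascProd σ (a + 1) (4 * h - 1) * σ (4 * h - 1)) := by rw [e2]; group
          _ = (σ (a + 1) * (σ a * ascProd σ (a + 2) (4 * h - 1)))
                * (ascProd σ (a + 1) (4 * h - 1) * σ (4 * h - 1)) := by rw [c1.eq]
          _ = (σ (a + 1) * σ a)
                * (ascProd σ (a + 2) (4 * h - 1) * ascProd σ (a + 1) (4 * h - 1)
                    * σ (4 * h - 1)) := by group
          _ = (σ (a + 1) * σ a)
                * (σ (a + 1) * (ascProd σ (a + 2) (4 * h - 1)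
                    * ascProd σ (a + 1) (4 * h - 1))) := by rw [IH]
          _ = (σ (a + 1) * σ a * σ (a + 1))
                * (ascProd σ (a + 2) (4 * h - 1) * ascProd σ (a + 1) (4 * h - 1)) := by group
          _ = (σ a * σ (a + 1) * σ a)
                * (ascProd σ (a + 2) (4 * h - 1) * ascProd σ (a + 1) (4 * h - 1)) := by
              rw [← hb]
          _ = σ a * (σ (a + 1) * (σ a * ascProd σ (a + 2) (4 * h - 1))
                * ascProd σ (a + 1) (4 * h - 1)) := by group
          _ = σ a * (σ (a + 1) * (ascProd σ (a + 2) (4 * h - 1) * σ a)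
                * ascProd σ (a + 1) (4 * h - 1)) := by rw [c1.eq]
          _ = σ a * ((σ (a + 1) * ascProd σ (a + 2) (4 * h - 1))
                * (σ a * ascProd σ (a + 1) (4 * h - 1))) := by group
          _ = σ a * (ascProd σ (a + 1) (4 * h - 1) * ascProd σ a (4 * h - 1)) := by
              rw [← e2, ← e1]
  -- δ² σ_{4h-1} = σ_1 δ²
  have d2 : δ ^ 2 * σ (4 * h - 1) = σ 1 * δ ^ 2 := by
    have hk := key (4 * h - 2) 1 (by omega) (by omega)
    rw [show (1 : ℕ) + 1 = 2 by norm_num] at hk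
    rw [← hδ] at hk
    have e : δ = σ 1 * ascProd σ 2 (4 * h - 1) := by
      rw [hδ]
      have e' := ascProd_head σ (a := 1) (b := 4 * h - 1) (by omega)
      rw [show (1 : ℕ) + 1 = 2 by norm_num] at e'
      exact e'
    calc δ ^ 2 * σ (4 * h - 1)
        = σ 1 * (ascProd σ 2 (4 * h - 1) * δ * σ (4 * h - 1)) := by
          rw [pow_two]; nth_rewrite 1 [e]; group
      _ = σ 1 * (σ 1 * (ascProd σ 2 (4 * h - 1) * δ)) := by rw [hk]
      _ = σ 1 * δ ^ 2 := by rw [pow_two]; nth_rewrite 2 [e]; group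
  -- σ_1 commutes with δ^{4h}
  have c1 : σ 1 * δ ^ (4 * h) = δ ^ (4 * h) * σ 1 := by
    have sp := shiftpow (4 * h - 2) 1 (by omega) (by omega)
    rw [show (1 : ℕ) + (4 * h - 2) = 4 * h - 1 by omega] at sp
    have e : δ ^ (4 * h) = δ ^ 2 * δ ^ (4 * h - 2) := by
      rw [← pow_add]; congr 1; omega
    have main : δ ^ (4 * h) * σ 1 = σ 1 * δ ^ (4 * h) := by
      calc δ ^ (4 * h) * σ 1 = δ ^ 2 * (δ ^ (4 * h - 2) * σ 1) := by rw [e, mul_assoc]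
        _ = δ ^ 2 * (σ (4 * h - 1) * δ ^ (4 * h - 2)) := by rw [sp]
        _ = (δ ^ 2 * σ (4 * h - 1)) * δ ^ (4 * h - 2) := by rw [mul_assoc]
        _ = (σ 1 * δ ^ 2) * δ ^ (4 * h - 2) := by rw [d2]
        _ = σ 1 * δ ^ (4 * h) := by rw [e, mul_assoc]
    exact main.symm
  -- every generator commutes with δ^{4h}
  have cent : ∀ i, 1 ≤ i → i ≤ 4 * h - 1 → Commute (σ i) (δ ^ (4 * h)) := by
    intro i hi1 hi2
    obtain ⟨p, rfl⟩ : ∃ p, i = p + 1 := ⟨i - 1, by omega⟩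
    have sp := shiftpow p 1 (by omega) (by omega)
    have e1 : (1 : ℕ) + p = p + 1 := by omega
    rw [e1] at sp
    have main : σ (p + 1) * δ ^ (4 * h) * δ ^ p = δ ^ (4 * h) * σ (p + 1) * δ ^ p := by
      calc σ (p + 1) * δ ^ (4 * h) * δ ^ p
          = σ (p + 1) * δ ^ p * δ ^ (4 * h) := by
            rw [mul_assoc, ← pow_add, Nat.add_comm (4 * h) p, pow_add, ← mul_assoc]
        _ = δ ^ p * σ 1 * δ ^ (4 * h) := by rw [← sp]
        _ = δ ^ p * (σ 1 * δ ^ (4 * h)) := by rw [mul_assoc]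
        _ = δ ^ p * (δ ^ (4 * h) * σ 1) := by rw [c1]
        _ = δ ^ (4 * h) * (δ ^ p * σ 1) := by
            rw [← mul_assoc, ← pow_add, Nat.add_comm p (4 * h), pow_add, mul_assoc]
        _ = δ ^ (4 * h) * (σ (p + 1) * δ ^ p) := by rw [sp]
        _ = δ ^ (4 * h) * σ (p + 1) * δ ^ p := by rw [mul_assoc]
    exact mul_right_cancel main
  -- the half-twist conjugation identity (uses only commutation relations)
  have tw : ∀ k, k + 1 ≤ 4 * h - 1 →
      descProd σ (4 * h - 1) (4 * h - 1 - k) * halfTwistAux σ (4 * h - 1) k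
        = halfTwistAux σ (4 * h - 1) k * ascProd σ (4 * h - 1 - k) (4 * h - 1) := by
    intro k
    induction k with
    | zero =>
        intro _
        simp only [Nat.sub_zero, halfTwistAux]
        rw [descProd_single, ascProd_single, mul_one, one_mul]
    | succ k ih =>
        intro hk
        have IH := ih (by omega)
        set a : ℕ := 4 * h - 1 - (k + 1) with haa
        have ha1 : 4 * h - 1 - k = a + 1 := by omega
        have hage : 1 ≤ a := by omega
        rw [ha1] at IH
        have hΦ : halfTwistAux σ (4 * h - 1) (k + 1)
            = descProd σ (4 * h - 1) (a + 1) * halfTwistAux σ (4 * h - 1) k := by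
          rw [halfTwistAux, ha1]
        have dlast : descProd σ (4 * h - 1) a
            = descProd σ (4 * h - 1) (a + 1) * σ a := descProd_last σ (by omega)
        have ahead : ascProd σ a (4 * h - 1)
            = σ a * ascProd σ (a + 1) (4 * h - 1) := ascProd_head σ (by omega)
        have cφ : Commute (σ a) (halfTwistAux σ (4 * h - 1) k) := by
          apply commute_halfTwistAux σ (4 * h - 1) k (by omega)
          intro j hj1 hj2
          rw [ha1] at hj1
          exact hcomm a j (by omega) (by omega) (by omega) (by omega) (by omega)
        rw [hΦ, dlast]
        calc descProd σ (4 * h - 1) (a + 1) * σ a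
              * (descProd σ (4 * h - 1) (a + 1) * halfTwistAux σ (4 * h - 1) k)
            = descProd σ (4 * h - 1) (a + 1)
              * (σ a * (descProd σ (4 * h - 1) (a + 1) * halfTwistAux σ (4 * h - 1) k)) := by
              group
          _ = descProd σ (4 * h - 1) (a + 1)
              * (σ a * (halfTwistAux σ (4 * h - 1) k * ascProd σ (a + 1) (4 * h - 1))) := by
              rw [IH]
          _ = descProd σ (4 * h - 1) (a + 1)
              * ((σ a * halfTwistAux σ (4 * h - 1) k) * ascProd σ (a + 1) (4 * h - 1)) := by
              group
          _ = descProd σ (4 * h - 1) (a + 1)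
              * ((halfTwistAux σ (4 * h - 1) k * σ a) * ascProd σ (a + 1) (4 * h - 1)) := by
              rw [cφ.eq]
          _ = (descProd σ (4 * h - 1) (a + 1) * halfTwistAux σ (4 * h - 1) k)
              * (σ a * ascProd σ (a + 1) (4 * h - 1)) := by group
          _ = (halfTwistAux σ (4 * h - 1) k * ascProd σ (a + 1) (4 * h - 1))
              * (σ a * ascProd σ (a + 1) (4 * h - 1)) := by rw [IH]
          _ = descProd σ (4 * h - 1) (a + 1) * halfTwistAux σ (4 * h - 1) k
              * ascProd σ a (4 * h - 1) := by rw [IH, ahead]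
  -- instantiate the half-twist identity at the block 2h+1 … 4h-1
  have e2h : 4 * h - 1 - (2 * h - 1) = 2 * h := by omega
  have twh := tw (2 * h - 1) (by omega)
  rw [e2h] at twh
  set Φ : G := halfTwistAux σ (4 * h - 1) (2 * h - 1) with hΦdef
  have dsplit : descProd σ (4 * h - 1) (2 * h)
      = descProd σ (4 * h - 1) (2 * h + 1) * σ (2 * h) := descProd_last σ (by omega)
  have δsplit : δ = ascProd σ 1 (2 * h - 1) * ascProd σ (2 * h) (4 * h - 1) := by
    rw [hδ]
    have := ascProd_split σ (a := 1) (c := 2 * h - 1) (b := 4 * h - 1) (by omega) (by omega)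
    rw [show 2 * h - 1 + 1 = 2 * h by omega] at this
    exact this
  have cAΦ : Commute (ascProd σ 1 (2 * h - 1)) Φ := by
    have : Commute Φ (ascProd σ 1 (2 * h - 1)) := by
      apply commute_ascProd σ
      intro j hj1 hj2
      have : Commute (σ j) Φ := by
        rw [hΦdef]
        apply commute_halfTwistAux σ (4 * h - 1) (2 * h - 1) (by omega)
        intro j' hj1' hj2'
        rw [e2h] at hj1'
        exact hcomm j j' (by omega) (by omega) (by omega) (by omega) (by omega)
      exact this.symm
    exact this.symm
  have cδΦ : Commute (δ ^ (4 * h)) Φ := by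
    rw [hΦdef]
    apply commute_halfTwistAux σ (4 * h - 1) (2 * h - 1) (by omega)
    intro j hj1 hj2
    rw [e2h] at hj1
    exact (cent j (by omega) (by omega)).symm
  -- the rearranged word is Φ δ Φ⁻¹
  have hr : ascProd σ 1 (2 * h - 1) * descProd σ (4 * h - 1) (2 * h + 1) * σ (2 * h)
      = Φ * δ * Φ⁻¹ := by
    have hd : descProd σ (4 * h - 1) (2 * h)
        = Φ * ascProd σ (2 * h) (4 * h - 1) * Φ⁻¹ := by
      rw [eq_mul_inv_iff_mul_eq]
      exact twh
    calc ascProd σ 1 (2 * h - 1) * descProd σ (4 * h - 1) (2 * h + 1) * σ (2 * h)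
        = ascProd σ 1 (2 * h - 1) * descProd σ (4 * h - 1) (2 * h) := by
          rw [dsplit]; group
      _ = ascProd σ 1 (2 * h - 1) * (Φ * ascProd σ (2 * h) (4 * h - 1) * Φ⁻¹) := by rw [hd]
      _ = (ascProd σ 1 (2 * h - 1) * Φ) * ascProd σ (2 * h) (4 * h - 1) * Φ⁻¹ := by group
      _ = (Φ * ascProd σ 1 (2 * h - 1)) * ascProd σ (2 * h) (4 * h - 1) * Φ⁻¹ := by
          rw [cAΦ.eq]
      _ = Φ * (ascProd σ 1 (2 * h - 1) * ascProd σ (2 * h) (4 * h - 1)) * Φ⁻¹ := by group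
      _ = Φ * δ * Φ⁻¹ := by rw [← δsplit]
  rw [hr, conj_pow, ← cδΦ.eq]
  exact (mul_inv_cancel_right _ _).symm
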